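/- If θ is consistent with P and satisfies counterfactual monotonicity condition 1 (P̃(s_{t+1}|s̃,ã) ≥ P(s_{t+1}|s̃,ã)), then for any s̃' ≠ s_{t+1}, P̃(s̃'|s̃,ã) ≤ min(P(s̃'|s̃,ã)/P(s_{t+1}|s_t,a_t), 1 − P(s_{t+1}|s̃,ã)). -/

import Mathlib

theorem cf_prob_monotonicity_ub {S A U : Type*} [Fintype S] [Fintype A] [Fintype U]
    [DecidableEq S]
    (f : S → A → U → S) (θ : U → ℝ)
    (hθ0 : ∀ u, 0 ≤ θ u) (hθsum : ∑ u, θ u = 1)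
    (P : S → S → A → ℝ)
    (hcons : ∀ s a s', ∑ u ∈ Finset.univ.filter (fun u => f s a u = s'), θ u = P s' s a)
    (st st1 sc sc' : S) (a_t ac : A)
    (hpos : 0 < P st1 st a_t)
    (hmon1 : P st1 sc ac ≤
      (∑ u ∈ Finset.univ.filter (fun u => f sc ac u = st1 ∧ f st a_t u = st1), θ u)
        / P st1 st a_t)
    (hne : sc' ≠ st1) :
    (∑ u ∈ Finset.univ.filter (fun u => f sc ac u = sc' ∧ f st a_t u = st1), θ u)
        / P st1 st a_t
      ≤ min (P sc' sc ac / P st1 st a_t) (1 - P st1 sc ac) := by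
  classical
  set N := ∑ u ∈ Finset.univ.filter (fun u => f sc ac u = sc' ∧ f st a_t u = st1), θ u with hN
  set M := ∑ u ∈ Finset.univ.filter (fun u => f sc ac u = st1 ∧ f st a_t u = st1), θ u with hM
  have h1 : N ≤ P sc' sc ac := by
    rw [← hcons sc ac sc']
    apply Finset.sum_le_sum_of_subset_of_nonneg
    · intro u hu
      simp only [Finset.mem_filter] at *
      exact ⟨hu.1, hu.2.1⟩
    · intro u _ _; exact hθ0 u
  have h2 : N + M ≤ P st1 st a_t := by
    rw [← hcons st a_t st1]
    have hdisj : Disjoint (Finset.univ.filter (fun u => f sc ac u = sc' ∧ f st a_t u = st1))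
        (Finset.univ.filter (fun u => f sc ac u = st1 ∧ f st a_t u = st1)) := by
      rw [Finset.disjoint_filter]
      intro u _ h1' h2'
      exact hne (h1'.1 ▸ h2'.1.symm ▸ rfl)
    rw [hN, hM, ← Finset.sum_union hdisj]
    apply Finset.sum_le_sum_of_subset_of_nonneg
    · intro u hu
      simp only [Finset.mem_union, Finset.mem_filter] at *
      rcases hu with h | h
      · exact ⟨h.1, h.2.2⟩
      · exact ⟨h.1, h.2.2⟩
    · intro u _ _; exact hθ0 u
  refine le_min ?_ ?_
  · exact div_le_div_of_nonneg_right h1 hpos.le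
  · have : N / P st1 st a_t + M / P st1 st a_t ≤ 1 := by
      rw [← add_div, div_le_one hpos]; exact h2
    have := hmon1.trans (le_of_eq rfl)
    linarith [hmon1]
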